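/- Let d1, d2 ∈ ℤ[i][X] satisfy 2*d1 = 2*(a + b + c) + a*b*c + r*s*t and 2*d2 = 2*(a + b + c) + a*b*c − r*s*t, and assume deg(d1) ≤ deg(d2) (so d1 = d₋ and d2 = d₊). Then d2 ≠ 0 with deg(d2) = α + β + γ, and either d1 = 0 or deg(d1) + α + β = γ (in particular deg(d1) < γ). -/
import Mathlib


open Polynomial

private lemma dpm_c2 : (2 : GaussianInt[X]) = C 2 := by
  rw [show ((2:GaussianInt)) = ((2:ℕ):GaussianInt) by norm_num, C_eq_natCast]; norm_num

private lemma dpm_c4 : (4 : GaussianInt[X]) = C 4 := by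
  rw [show ((4:GaussianInt)) = ((4:ℕ):GaussianInt) by norm_num, C_eq_natCast]; norm_num

private lemma dpm_nd2 (p : GaussianInt[X]) : (2*p).natDegree = p.natDegree := by
  rw [dpm_c2, natDegree_C_mul (by decide : (2:GaussianInt) ≠ 0)]

private lemma dpm_nd4 (p : GaussianInt[X]) : (4*p).natDegree = p.natDegree := by
  rw [dpm_c4, natDegree_C_mul (by decide : (4:GaussianInt) ≠ 0)]

private lemma dpm_4ne : (4 : GaussianInt[X]) ≠ 0 := by
  rw [dpm_c4]; exact C_ne_zero.mpr (by decide)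

private lemma dpm_p4 (p : GaussianInt[X]) (h : 0 < p.natDegree) :
    (p + 4).natDegree = p.natDegree ∧ p + 4 ≠ 0 := by
  have h1 : (p + 4).natDegree = p.natDegree := by rw [dpm_c4, natDegree_add_C]
  refine ⟨h1, fun h0 => ?_⟩
  rw [h0] at h1
  simp only [natDegree_zero] at h1
  omega

set_option maxHeartbeats 2000000 in
set_option maxHeartbeats 1000000 in
private lemma dpm_stepB (a b c r s t d1 d2 : GaussianInt[X])
    (hc : c ≠ 0)
    (hr : a * b + 4 = r ^ 2) (hs : a * c + 4 = s ^ 2) (ht : b * c + 4 = t ^ 2)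
    (hαβ : a.natDegree ≤ b.natDegree) (hβγ : b.natDegree ≤ c.natDegree)
    (hγ : 0 < c.natDegree)
    (hd1 : 2 * d1 = 2 * (a + b + c) + a * b * c + r * s * t)
    (hd2 : 2 * d2 = 2 * (a + b + c) + a * b * c - r * s * t)
    (hd1ne : d1 ≠ 0) (hd2ne : d2 ≠ 0)
    (hd2deg : d2.natDegree = a.natDegree + b.natDegree + c.natDegree) :
    d1.natDegree + a.natDegree + b.natDegree = c.natDegree := by
  have tab : (a+b).natDegree ≤ b.natDegree :=
    (natDegree_add_le a b).trans (max_le hαβ le_rfl)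
  have hU : (s*t + r*c)^2 = 4*(c*d1+4) := by
    linear_combination (-(t^2))*hs + (-(a*c+4))*ht + (-(c^2))*hr + (-(2*c))*hd1
  have hV : (s*t - r*c)^2 = 4*(c*d2+4) := by
    linear_combination (-(t^2))*hs + (-(a*c+4))*ht + (-(c^2))*hr + (-(2*c))*hd2
  have hUV : (s*t + r*c)*(s*t - r*c) = 4*(c*(a+b-c)+4) := by
    linear_combination (-(t^2))*hs + (-(a*c+4))*ht + (c^2)*hr
  have hcd1 : (c*d1).natDegree = c.natDegree + d1.natDegree := natDegree_mul hc hd1ne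
  obtain ⟨n1, ne1⟩ := dpm_p4 (c*d1) (by omega)
  have hUne : s*t + r*c ≠ 0 := by
    intro h0
    have h4 : (4:GaussianInt[X])*(c*d1+4) = 0 := by rw [← hU, h0]; ring
    rcases mul_eq_zero.mp h4 with h | h
    · exact dpm_4ne h
    · exact ne1 h
  have hU2 : 2 * (s*t + r*c).natDegree = c.natDegree + d1.natDegree := by
    have e := natDegree_pow (s*t + r*c) 2
    rw [hU, dpm_nd4, n1, hcd1] at e; omega
  have hcd2 : (c*d2).natDegree
      = c.natDegree + (a.natDegree + b.natDegree + c.natDegree) := by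
    rw [natDegree_mul hc hd2ne, hd2deg]
  obtain ⟨n2, ne2⟩ := dpm_p4 (c*d2) (by omega)
  have hVne : s*t - r*c ≠ 0 := by
    intro h0
    have h4 : (4:GaussianInt[X])*(c*d2+4) = 0 := by rw [← hV, h0]; ring
    rcases mul_eq_zero.mp h4 with h | h
    · exact dpm_4ne h
    · exact ne2 h
  have hV2 : 2 * (s*t - r*c).natDegree
      = c.natDegree + (a.natDegree + b.natDegree + c.natDegree) := by
    have e := natDegree_pow (s*t - r*c) 2
    rw [hV, dpm_nd4, n2, hcd2] at e; omega
  have hwne : a + b - c ≠ 0 := by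
    intro h0
    have h16 : (s*t + r*c)*(s*t - r*c) = 4 * (4:GaussianInt[X]) := by
      rw [hUV, h0]; ring
    have e := natDegree_mul hUne hVne
    rw [h16, dpm_nd4, dpm_c4, natDegree_C] at e
    omega
  have hcw : (c*(a+b-c)).natDegree = c.natDegree + (a+b-c).natDegree :=
    natDegree_mul hc hwne
  obtain ⟨n3, ne3⟩ := dpm_p4 (c*(a+b-c)) (by omega)
  have hUV2 : (s*t + r*c).natDegree + (s*t - r*c).natDegree
      = c.natDegree + (a+b-c).natDegree := by
    have e := natDegree_mul hUne hVne
    rw [hUV, dpm_nd4, n3, hcw] at e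
    exact e.symm
  have hkle : (a+b-c).natDegree ≤ c.natDegree :=
    (natDegree_sub_le _ _).trans (max_le (tab.trans hβγ) le_rfl)
  have hkγ : (a+b-c).natDegree = c.natDegree := by
    rcases lt_or_eq_of_le hβγ with hlt | heq
    · have h1 : (a+b).natDegree < c.natDegree := by omega
      exact natDegree_sub_eq_right_of_natDegree_lt h1
    · omega
  omega


/-- Degrees of d₊ and d₋ for a D(4)-triple in ℤ[i][X]. -/
theorem degrees_of_d_plus_minus
    (a b c r s t : GaussianInt[X])
    (ha : a ≠ 0) (hb : b ≠ 0) (hc : c ≠ 0)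
    (hab : a ≠ b) (hac : a ≠ c) (hbc : b ≠ c)
    (hr : a * b + 4 = r ^ 2) (hs : a * c + 4 = s ^ 2) (ht : b * c + 4 = t ^ 2)
    (hαβ : a.natDegree ≤ b.natDegree) (hβγ : b.natDegree ≤ c.natDegree)
    (hβ : 0 < b.natDegree) (hγ : 0 < c.natDegree)
    (d1 d2 : GaussianInt[X])
    (hd1 : 2 * d1 = 2 * (a + b + c) + a * b * c + r * s * t)
    (hd2 : 2 * d2 = 2 * (a + b + c) + a * b * c - r * s * t)
    (hdeg : d1.natDegree ≤ d2.natDegree) :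
    d2 ≠ 0 ∧ d2.natDegree = a.natDegree + b.natDegree + c.natDegree ∧
      (d1 = 0 ∨ d1.natDegree + a.natDegree + b.natDegree = c.natDegree) := by
  have nab : (a*b).natDegree = a.natDegree + b.natDegree := natDegree_mul ha hb
  have nac : (a*c).natDegree = a.natDegree + c.natDegree := natDegree_mul ha hc
  have nbc : (b*c).natDegree = b.natDegree + c.natDegree := natDegree_mul hb hc
  obtain ⟨nab4, hab4ne⟩ := dpm_p4 (a*b) (by omega)
  obtain ⟨nac4, hac4ne⟩ := dpm_p4 (a*c) (by omega)
  obtain ⟨nbc4, hbc4ne⟩ := dpm_p4 (b*c) (by omega)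
  have hrne : r ≠ 0 := by intro h0; rw [h0] at hr; simp at hr; exact hab4ne hr
  have hsne : s ≠ 0 := by intro h0; rw [h0] at hs; simp at hs; exact hac4ne hs
  have htne : t ≠ 0 := by intro h0; rw [h0] at ht; simp at ht; exact hbc4ne ht
  have ndr : 2 * r.natDegree = a.natDegree + b.natDegree := by
    have e := natDegree_pow r 2
    rw [← hr, nab4, nab] at e; omega
  have nds : 2 * s.natDegree = a.natDegree + c.natDegree := by
    have e := natDegree_pow s 2
    rw [← hs, nac4, nac] at e; omega
  have ndt : 2 * t.natDegree = b.natDegree + c.natDegree := by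
    have e := natDegree_pow t 2
    rw [← ht, nbc4, nbc] at e; omega
  have habcne : a * b * c ≠ 0 := mul_ne_zero (mul_ne_zero ha hb) hc
  have nabc : (a*b*c).natDegree = a.natDegree + b.natDegree + c.natDegree := by
    rw [natDegree_mul (mul_ne_zero ha hb) hc, nab]
  have hFne : r * s * t ≠ 0 := mul_ne_zero (mul_ne_zero hrne hsne) htne
  have ndF : (r*s*t).natDegree = a.natDegree + b.natDegree + c.natDegree := by
    have e1 : (r*s*t).natDegree = r.natDegree + s.natDegree + t.natDegree := by
      rw [natDegree_mul (mul_ne_zero hrne hsne) htne, natDegree_mul hrne hsne]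
    omega
  have tab : (a+b).natDegree ≤ b.natDegree :=
    (natDegree_add_le a b).trans (max_le hαβ le_rfl)
  have hsum : (2*(a+b+c)).natDegree ≤ c.natDegree := by
    rw [dpm_nd2]
    exact (natDegree_add_le _ _).trans (max_le (tab.trans hβγ) le_rfl)
  have ndE_le : (2*(a+b+c) + a*b*c).natDegree ≤
      a.natDegree + b.natDegree + c.natDegree := by
    refine (natDegree_add_le _ _).trans (max_le ?_ ?_)
    · omega
    · rw [nabc]
  have hcE : (2*(a+b+c) + a*b*c).coeff (a.natDegree + b.natDegree + c.natDegree)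
      = (a*b*c).coeff (a.natDegree + b.natDegree + c.natDegree) := by
    rw [coeff_add, coeff_eq_zero_of_natDegree_lt (by omega), zero_add]
  have hcabc : (a*b*c).coeff (a.natDegree + b.natDegree + c.natDegree) ≠ 0 := by
    rw [← nabc, coeff_natDegree]
    exact leadingCoeff_ne_zero.mpr habcne
  -- Step A: no cancellation at top degree in 2*d2 = E - F
  have hkey : ((2*(a+b+c) + a*b*c) - r*s*t).coeff
      (a.natDegree + b.natDegree + c.natDegree) ≠ 0 := by
    intro h0
    rw [coeff_sub, sub_eq_zero] at h0
    have hplus : ((2*(a+b+c) + a*b*c) + r*s*t).coeff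
        (a.natDegree + b.natDegree + c.natDegree)
        = 2 * (a*b*c).coeff (a.natDegree + b.natDegree + c.natDegree) := by
      rw [coeff_add, ← h0, hcE]; ring
    have hne2 : ((2*(a+b+c) + a*b*c) + r*s*t).coeff
        (a.natDegree + b.natDegree + c.natDegree) ≠ 0 := by
      rw [hplus]; exact mul_ne_zero (by decide) hcabc
    have h1 : a.natDegree + b.natDegree + c.natDegree ≤ (2*d1).natDegree :=
      le_natDegree_of_ne_zero (by rw [hd1]; exact hne2)
    rw [dpm_nd2] at h1
    have h3 : (2*d2).natDegree ≤ a.natDegree + b.natDegree + c.natDegree := by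
      rw [hd2]
      refine (natDegree_sub_le _ _).trans (max_le ndE_le ?_)
      rw [ndF]
    rw [dpm_nd2] at h3
    have hd2σ : d2.natDegree = a.natDegree + b.natDegree + c.natDegree := by omega
    have hd2ne : d2 ≠ 0 := by
      intro h; rw [h] at hd2σ; simp only [natDegree_zero] at hd2σ; omega
    have h2d2ne : (2*d2 : GaussianInt[X]) ≠ 0 :=
      mul_ne_zero two_ne_zero hd2ne
    have hlc : (2*d2).leadingCoeff = 0 := by
      rw [leadingCoeff, dpm_nd2, hd2σ, hd2, coeff_sub, sub_eq_zero]
      exact h0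
    exact h2d2ne (leadingCoeff_eq_zero.mp hlc)
  have hσd2 : a.natDegree + b.natDegree + c.natDegree ≤ d2.natDegree := by
    have h1 : a.natDegree + b.natDegree + c.natDegree ≤ (2*d2).natDegree :=
      le_natDegree_of_ne_zero (by rw [hd2]; exact hkey)
    rwa [dpm_nd2] at h1
  have hd2le : d2.natDegree ≤ a.natDegree + b.natDegree + c.natDegree := by
    have h3 : (2*d2).natDegree ≤ a.natDegree + b.natDegree + c.natDegree := by
      rw [hd2]
      refine (natDegree_sub_le _ _).trans (max_le ndE_le ?_)
      rw [ndF]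
    rwa [dpm_nd2] at h3
  have hd2deg : d2.natDegree = a.natDegree + b.natDegree + c.natDegree := by omega
  have hd2ne : d2 ≠ 0 := by
    intro h; rw [h] at hd2deg; simp only [natDegree_zero] at hd2deg; omega
  refine ⟨hd2ne, hd2deg, ?_⟩
  -- Step B: degree of d1 when d1 ≠ 0
  rcases eq_or_ne d1 0 with hd1z | hd1ne
  · exact Or.inl hd1z
  · exact Or.inr (dpm_stepB a b c r s t d1 d2 hc hr hs ht hαβ hβγ hγ hd1 hd2
      hd1ne hd2ne hd2deg)
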